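/- The star root of P_q satisfies ∛P_q := P_q \ (P_q²·P_q*) = (P_q \ {q_0}*) ∪ {q_0}, and this set is contained in {q_0} ∪ { v : v ⊑ q and |q_0| + |v| > |q| }. -/

import Mathlib

/-- `u ^ n` for lists: concatenation of `n` copies of `u`. -/
def listPow {X : Type*} (u : List X) : ℕ → List X
  | 0 => []
  | n+1 => u ++ listPow u n

/-- `P_q = { v : e ⊏ v ⊑ q ⊏ v·q }`. -/
def Pq {X : Type*} (q : List X) : Set (List X) :=
  {v | v ≠ [] ∧ v <+: q ∧ q <+: v ++ q}

/-- membership in the submonoid `P^*` generated by `P`. -/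
def InStar {X : Type*} (P : Set (List X)) (w : List X) : Prop :=
  ∃ l : List (List X), (∀ v ∈ l, v ∈ P) ∧ w = l.flatten

/-- A finite word `w` is quasiperiodic with quasiperiod `q`. -/
def QuasiPeriodic {X : Type*} (q w : List X) : Prop :=
  ∀ j < w.length, ∃ u : List X, u.length ≤ j ∧ j < u.length + q.length ∧ (u ++ q) <+: w

/-- `Q_q`: the set of finite words quasiperiodic with quasiperiod `q`. -/
def Qq {X : Type*} (q : List X) : Set (List X) := {w | QuasiPeriodic q w}

/-- `u` is a (finite) prefix of the infinite word `ξ`. -/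
def InfPrefix {X : Type*} (ξ : ℕ → X) (u : List X) : Prop :=
  u = (List.range u.length).map ξ

/-- An infinite word `ξ` is quasiperiodic with quasiperiod `q`. -/
def QuasiPeriodicInf {X : Type*} (q : List X) (ξ : ℕ → X) : Prop :=
  ∀ j : ℕ, ∃ u : List X, u.length ≤ j ∧ j < u.length + q.length ∧ InfPrefix ξ (u ++ q)

/-- the star root `P \ (P²·P*)`. -/
def StarRoot {X : Type*} (P : Set (List X)) : Set (List X) :=
  {v | v ∈ P ∧ ¬ ∃ (a b : List X) (l : List (List X)),
    a ∈ P ∧ b ∈ P ∧ (∀ x ∈ l, x ∈ P) ∧ v = a ++ b ++ l.flatten}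

/-- `ξ ∈ P^ω`: infinite concatenation of nonempty words of `P`. -/
def InOmega {X : Type*} (P : Set (List X)) (ξ : ℕ → X) : Prop :=
  ∃ f : ℕ → List X, (∀ i, f i ∈ P ∧ f i ≠ []) ∧
    ∀ n, InfPrefix ξ ((List.range n).map f).flatten


section Aux
open List
variable {X : Type*}

/-- `p` is a period of `q`. -/
def Per (q : List X) (p : ℕ) : Prop :=
  ∀ i (h : i + p < q.length), q[i+p]'h = q[i]'(by omega)

lemma per_iff (q : List X) (p : ℕ) (hp : p ≤ q.length) :
    q <+: q.take p ++ q ↔ Per q p := by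
  constructor
  · intro h i hi
    have h1 : q[i+p]'hi = (q.take p ++ q)[i+p]'(by
        simp only [List.length_append, List.length_take]; omega) := h.getElem hi
    rw [h1, List.getElem_append_right (by
        simp only [List.length_take]; omega)]
    simp only [List.length_take, Nat.min_eq_left hp, List.getElem_take]
    congr 1
    omega
  · intro h
    rw [List.prefix_iff_eq_take]
    apply List.ext_getElem (by
      simp only [List.length_take, List.length_append]; omega)
    intro i h1 h2
    rw [List.getElem_take]
    by_cases hip : i < p
    · rw [List.getElem_append_left (by
        simp only [List.length_take]; omega)]
      simp
    · rw [List.getElem_append_right (by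
        simp only [List.length_take]; omega)]
      simp only [List.length_take, Nat.min_eq_left hp]
      have hq : i - p + p = i := by omega
      have := h (i - p) (by omega)
      simp only [hq] at this
      exact this

lemma per_sub (q : List X) (p0 p : ℕ) (h1 : p0 ≤ p) (h2 : p0 + p ≤ q.length)
    (hp0 : Per q p0) (hp : Per q p) : Per q (p - p0) := by
  intro i hi
  by_cases hcase : i + p < q.length
  · have e1 := hp0 (i + (p - p0)) (by omega)
    have e2 := hp i hcase
    simp only [show i + (p - p0) + p0 = i + p from by omega] at e1
    rw [← e1, e2]
  · have e1 := hp0 (i - p0) (by omega)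
    have e2 := hp (i - p0) (by omega)
    simp only [show i - p0 + p0 = i from by omega] at e1
    simp only [show i - p0 + p = i + (p - p0) from by omega] at e2
    rw [e2, e1]

lemma mem_Pq_iff (q v : List X) :
    (v ≠ [] ∧ v <+: q ∧ q <+: v ++ q) ↔
      (v ≠ [] ∧ v.length ≤ q.length ∧ v = q.take v.length ∧ Per q v.length) := by
  constructor
  · rintro ⟨h1, h2, h3⟩
    have hle := h2.length_le
    have hv : v = q.take v.length := List.prefix_iff_eq_take.mp h2
    refine ⟨h1, hle, hv, ?_⟩
    rw [← per_iff q v.length hle, ← hv]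
    exact h3
  · rintro ⟨h1, h2, h3, h4⟩
    refine ⟨h1, ?_, ?_⟩
    · rw [List.prefix_iff_eq_take]; exact h3
    · rw [show v = q.take v.length from h3]
      exact (per_iff q v.length h2).mpr h4


lemma mem_Pq_iff' (q v : List X) :
    v ∈ Pq q ↔
      (v ≠ [] ∧ v.length ≤ q.length ∧ v = q.take v.length ∧ Per q v.length) := by
  rw [show (v ∈ Pq q) = (v ≠ [] ∧ v <+: q ∧ q <+: v ++ q) from rfl]
  exact mem_Pq_iff q v

lemma listPow_add (u : List X) (a b : ℕ) :
    listPow u (a + b) = listPow u a ++ listPow u b := by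
  induction a with
  | zero => simp [listPow]
  | succ a ih =>
    have h : a + 1 + b = (a + b) + 1 := by omega
    rw [h]
    show u ++ listPow u (a + b) = (u ++ listPow u a) ++ listPow u b
    rw [ih, List.append_assoc]

lemma listPow_replicate (u : List X) (m : ℕ) :
    listPow u m = (List.replicate m u).flatten := by
  induction m with
  | zero => rfl
  | succ m ih => show u ++ listPow u m = _; rw [ih, List.replicate_succ, List.flatten_cons]

lemma take_eq_append (q : List X) (p0 l : ℕ) (hper : Per q p0) (hp0 : p0 ≤ l)
    (hl : l ≤ q.length) :
    q.take l = q.take p0 ++ q.take (l - p0) := by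
  apply List.ext_getElem (by simp only [List.length_take, List.length_append]; omega)
  intro i h1 h2
  rw [List.getElem_take]
  by_cases hip : i < p0
  · rw [List.getElem_append_left (by simp only [List.length_take]; omega), List.getElem_take]
  · rw [List.getElem_append_right (by simp only [List.length_take]; omega)]
    simp only [List.getElem_take, List.length_take, Nat.min_eq_left (le_trans hp0 hl)]
    have := hper (i - p0) (by simp only [List.length_take] at h1; omega)
    simp only [show i - p0 + p0 = i from by omega] at this
    exact this

lemma pow_of_small (q q0 : List X) (h0 : q0 ∈ Pq q)
    (hmin : ∀ v ∈ Pq q, q0.length ≤ v.length) :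
    ∀ N : ℕ, ∀ v ∈ Pq q, v.length ≤ N → q0.length + v.length ≤ q.length →
      ∃ m, v = listPow q0 m := by
  obtain ⟨hq0ne, hq0len, hq0take, hq0per⟩ := (mem_Pq_iff' q q0).mp h0
  have hp0pos : 0 < q0.length := List.length_pos_iff.mpr hq0ne
  intro N
  induction N with
  | zero =>
    intro v hv hlen _
    exact absurd (List.eq_nil_of_length_eq_zero (by omega)) hv.1
  | succ N ih =>
    intro v hv hlen hsum
    obtain ⟨hvne, hvlen, hvtake, hvper⟩ := (mem_Pq_iff' q v).mp hv
    have hminv := hmin v hv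
    by_cases hcase : v.length = q0.length
    · refine ⟨1, ?_⟩
      show v = q0 ++ listPow q0 0
      rw [show listPow q0 0 = ([] : List X) from rfl, List.append_nil,
        hvtake, hcase, ← hq0take]
    · have hlt : q0.length < v.length := by omega
      set p := v.length - q0.length with hp
      have hpn : p ≤ q.length := by omega
      have hper' : Per q p := per_sub q q0.length v.length hminv (by omega) hq0per hvper
      have hv' : q.take p ∈ Pq q := by
        rw [mem_Pq_iff']
        have hl : (q.take p).length = p := by
          simp only [List.length_take]; omega
        refine ⟨?_, by rw [hl]; omega, by rw [hl], by rw [hl]; exact hper'⟩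
        intro hnil
        rw [hnil] at hl
        simp at hl
        omega
      obtain ⟨m, hm⟩ := ih (q.take p) hv'
        (by simp only [List.length_take]; omega)
        (by simp only [List.length_take]; omega)
      refine ⟨m + 1, ?_⟩
      show v = q0 ++ listPow q0 m
      rw [← hm, hvtake, take_eq_append q q0.length v.length hq0per (by omega) hvlen,
        ← hq0take]

lemma flatten_pow (q0 : List X) :
    ∀ l : List (List X), (∀ x ∈ l, ∃ m, x = listPow q0 m) →
      ∃ m, l.flatten = listPow q0 m := by
  intro l
  induction l with
  | nil => exact fun _ => ⟨0, rfl⟩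
  | cons a t ih =>
    intro h
    obtain ⟨m1, h1⟩ := h a List.mem_cons_self
    obtain ⟨m2, h2⟩ := ih fun x hx => h x (List.mem_cons_of_mem _ hx)
    exact ⟨m1 + m2, by simp only [List.flatten_cons, h1, h2, listPow_add]⟩

end Aux

/-- `∛P_q = (P_q \ {q₀}^*) ∪ {q₀} ⊆ {q₀} ∪ {v : v ⊑ q ∧ |q₀| + |v| > |q|}`. -/
theorem stmt12 {X : Type*} (q : List X) (hq : q ≠ []) (q0 : List X)
    (h0 : q0 ∈ Pq q) (hmin : ∀ v ∈ Pq q, q0.length ≤ v.length) :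
    StarRoot (Pq q) = (Pq q \ {v : List X | ∃ m : ℕ, v = listPow q0 m}) ∪ {q0} ∧
    StarRoot (Pq q) ⊆
      insert q0 {v : List X | v <+: q ∧ q.length < q0.length + v.length} := by
  obtain ⟨hq0ne, hq0pre, hq0r⟩ := h0
  have h0 : q0 ∈ Pq q := ⟨hq0ne, hq0pre, hq0r⟩
  have hp0pos : 0 < q0.length := List.length_pos_iff.mpr hq0ne
  have key : ∀ v ∈ Pq q, q0.length + v.length ≤ q.length → ∃ m, v = listPow q0 m :=
    fun v hv h => pow_of_small q q0 h0 hmin v.length v hv le_rfl h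
  have hq0star : q0 ∈ StarRoot (Pq q) := by
    refine ⟨h0, ?_⟩
    rintro ⟨a, b, l, ha, hb, -, heq⟩
    have h1 := hmin a ha
    have h2 := hmin b hb
    have h3 : q0.length = a.length + b.length + l.flatten.length := by
      rw [heq]; simp; omega
    omega
  have hstar_pow : ∀ v ∈ StarRoot (Pq q), (∃ m, v = listPow q0 m) → v = q0 := by
    rintro v ⟨hv, hnd⟩ ⟨m, hm⟩
    match m with
    | 0 => exact absurd hm hv.1
    | 1 => simpa [listPow] using hm
    | (k+2) =>
      exfalso
      apply hnd
      refine ⟨q0, q0, List.replicate k q0, h0, h0,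
        fun x hx => by rw [List.eq_of_mem_replicate hx]; exact h0, ?_⟩
      rw [hm, ← listPow_replicate]
      show q0 ++ (q0 ++ listPow q0 k) = q0 ++ q0 ++ listPow q0 k
      rw [List.append_assoc]
  constructor
  · ext v
    constructor
    · intro hv
      by_cases hpow : ∃ m, v = listPow q0 m
      · exact Or.inr (hstar_pow v hv hpow)
      · exact Or.inl ⟨hv.1, hpow⟩
    · rintro (⟨hvP, hvnp⟩ | hv)
      · refine ⟨hvP, ?_⟩
        rintro ⟨a, b, l, ha, hb, hl, heq⟩
        apply hvnp
        have hvn : v.length ≤ q.length := hvP.2.1.length_le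
        have hlen : v.length = a.length + b.length + l.flatten.length := by
          rw [heq]; simp; omega
        have hbnd : ∀ x ∈ l, x.length ≤ l.flatten.length := by
          intro x hx
          rw [List.length_flatten]
          exact List.single_le_sum (fun _ _ => Nat.zero_le _) _
            (List.mem_map_of_mem hx)
        have hma := hmin a ha
        have hmb := hmin b hb
        obtain ⟨ma, ha'⟩ := key a ha (by omega)
        obtain ⟨mb, hb'⟩ := key b hb (by omega)
        obtain ⟨mc, hc'⟩ := flatten_pow q0 l fun x hx =>
          key x (hl x hx) (by have := hbnd x hx; omega)
        exact ⟨ma + mb + mc, by rw [heq, ha', hb', hc', listPow_add, listPow_add]⟩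
      · rw [Set.mem_singleton_iff.mp hv]
        exact hq0star
  · intro v hv
    rw [Set.mem_insert_iff]
    by_cases hvq : v = q0
    · exact Or.inl hvq
    · refine Or.inr ⟨hv.1.2.1, ?_⟩
      by_contra hle
      push_neg at hle
      obtain ⟨m, hm⟩ := key v hv.1 (by omega)
      exact hvq (hstar_pow v hv ⟨m, hm⟩)
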